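/- Let R = α • 1 be a nonzero scalar multiple of the identity matrix in Matrix (Fin 2 × Fin 2) (Fin 2 × Fin 2) ℂ (α ∈ ℂ, α ≠ 0), and let S be any matrix in Matrix (Fin 2 × Fin 2) (Fin 2 × Fin 2) ℂ. Then the pair (S,R) satisfies the loop braid relations if and only if S = 1 or S = -1. -/
import Mathlib


open Matrix

noncomputable section

/-- The width-3 matrix `M₁ = M ⊗ 1`. -/
def Lone {N : ℕ} (M : Matrix (Fin N × Fin N) (Fin N × Fin N) ℂ) :
    Matrix (Fin N × Fin N × Fin N) (Fin N × Fin N × Fin N) ℂ :=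
  Matrix.of fun p q =>
    M (p.1, p.2.1) (q.1, q.2.1) * (if p.2.2 = q.2.2 then (1 : ℂ) else 0)

/-- The width-3 matrix `M₂ = 1 ⊗ M`. -/
def Ltwo {N : ℕ} (M : Matrix (Fin N × Fin N) (Fin N × Fin N) ℂ) :
    Matrix (Fin N × Fin N × Fin N) (Fin N × Fin N × Fin N) ℂ :=
  Matrix.of fun p q =>
    (if p.1 = q.1 then (1 : ℂ) else 0) * M (p.2.1, p.2.2) (q.2.1, q.2.2)

/-- The pair (S,R) satisfies the loop braid relations. -/
def LoopBraid {N : ℕ} (S R : Matrix (Fin N × Fin N) (Fin N × Fin N) ℂ) : Prop :=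
  S * S = 1 ∧
  Lone S * Ltwo S * Lone S = Ltwo S * Lone S * Ltwo S ∧
  Lone R * Ltwo R * Lone R = Ltwo R * Lone R * Ltwo R ∧
  Lone R * Ltwo R * Lone S = Ltwo S * Lone R * Ltwo R ∧
  Lone R * Ltwo S * Lone S = Ltwo S * Lone S * Ltwo R

/-- A width-2 rank-N matrix is charge-conserving. -/
def ChargeConserving {N : ℕ} (M : Matrix (Fin N × Fin N) (Fin N × Fin N) ℂ) : Prop :=
  ∀ k l i j : Fin N, M (k, l) (i, j) ≠ 0 → ((k, l) = (i, j) ∨ (k, l) = (j, i))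

/-- The element of `Fin 2` labelled `1`. -/
lemma Lone_one {N : ℕ} : Lone (1 : Matrix (Fin N × Fin N) (Fin N × Fin N) ℂ) = 1 := by
  ext ⟨a,b,c⟩ ⟨a',b',c'⟩
  simp [Lone, Matrix.one_apply, Prod.ext_iff]
  split_ifs <;> simp_all

lemma Ltwo_one {N : ℕ} : Ltwo (1 : Matrix (Fin N × Fin N) (Fin N × Fin N) ℂ) = 1 := by
  ext ⟨a,b,c⟩ ⟨a',b',c'⟩
  simp [Ltwo, Matrix.one_apply, Prod.ext_iff]
  split_ifs <;> simp_all

lemma Lone_smul {N : ℕ} (β : ℂ) (M : Matrix (Fin N × Fin N) (Fin N × Fin N) ℂ) :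
    Lone (β • M) = β • Lone M := by
  ext ⟨a,b,c⟩ ⟨a',b',c'⟩
  simp [Lone, Matrix.smul_apply, smul_eq_mul, mul_assoc]

lemma Ltwo_smul {N : ℕ} (β : ℂ) (M : Matrix (Fin N × Fin N) (Fin N × Fin N) ℂ) :
    Ltwo (β • M) = β • Ltwo M := by
  ext ⟨a,b,c⟩ ⟨a',b',c'⟩
  simp [Ltwo, Matrix.smul_apply, smul_eq_mul]

lemma Lone_neg {N : ℕ} (M : Matrix (Fin N × Fin N) (Fin N × Fin N) ℂ) :
    Lone (-M) = -Lone M := by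
  ext ⟨a,b,c⟩ ⟨a',b',c'⟩
  simp [Lone, Matrix.neg_apply]
  split_ifs <;> simp

lemma Ltwo_neg {N : ℕ} (M : Matrix (Fin N × Fin N) (Fin N × Fin N) ℂ) :
    Ltwo (-M) = -Ltwo M := by
  ext ⟨a,b,c⟩ ⟨a',b',c'⟩
  simp [Ltwo, Matrix.neg_apply]

def e1 : Fin 2 := 0
/-- The element of `Fin 2` labelled `2`. -/
def e2 : Fin 2 := 1

theorem stmt0 (α : ℂ) (hα : α ≠ 0)
    (R S : Matrix (Fin 2 × Fin 2) (Fin 2 × Fin 2) ℂ)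
    (hR : R = α • (1 : Matrix (Fin 2 × Fin 2) (Fin 2 × Fin 2) ℂ)) :
    LoopBraid S R ↔ (S = 1 ∨ S = -1) := by
  subst hR
  constructor
  · rintro ⟨hss, -, -, h4, -⟩
    rw [Lone_smul, Ltwo_smul, Lone_one, Ltwo_one] at h4
    have h4' : (α * α) • Lone S = (α * α) • Ltwo S := by
      calc (α * α) • Lone S = (α • (1:Matrix (Fin 2 × Fin 2 × Fin 2) _ ℂ)) * (α • 1) * Lone S := by
            simp [smul_smul, Matrix.smul_mul, Matrix.mul_smul]
        _ = Ltwo S * (α • 1) * (α • 1) := h4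
        _ = (α * α) • Ltwo S := by
            simp [smul_smul, Matrix.smul_mul, Matrix.mul_smul, mul_comm]
    have h : Lone S = Ltwo S := by
      have hne : (α * α) ≠ 0 := mul_ne_zero hα hα
      exact smul_right_injective _ hne h4'
    have hkey : ∀ a b c a' b' c' : Fin 2,
        S (a,b) (a',b') * (if c = c' then (1:ℂ) else 0)
          = (if a = a' then (1:ℂ) else 0) * S (b,c) (b',c') := by
      intro a b c a' b' c'
      have := Matrix.ext_iff.mpr h (a,b,c) (a',b',c')
      simpa [Lone, Ltwo] using this
    have hz1 : ∀ a b a' b' : Fin 2, a ≠ a' → S (a,b) (a',b') = 0 := by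
      intro a b a' b' hne
      have := hkey a b 0 a' b' 0
      simpa [hne] using this
    have hz2 : ∀ b c b' c' : Fin 2, c ≠ c' → S (b,c) (b',c') = 0 := by
      intro b c b' c' hne
      have := hkey 0 b c 0 b' c'
      simpa [hne] using (this.symm)
    have hd : ∀ a b c b' : Fin 2, S (a,b) (a,b') = S (b,c) (b',c) := by
      intro a b c b'
      have := hkey a b c a b' c
      simpa using this
    set lam : ℂ := S (0,0) (0,0) with hlam
    have hS : S = lam • 1 := by
      ext ⟨i,j⟩ ⟨i',j'⟩
      by_cases hi : i = i'
      · by_cases hj : j = j'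
        · subst hi; subst hj
          have e1 : S (i,j) (i,j) = S (j,(0:Fin 2)) (j,0) := hd i j 0 j
          have e2 : S (j,(0:Fin 2)) (j,0) = S ((0:Fin 2),0) (0,0) := hd j 0 0 0
          simp [Matrix.smul_apply, Matrix.one_apply, e1, e2, hlam]
        · have : ¬((i,j) = (i',j')) := by simp [Prod.ext_iff, hj]
          simp [Matrix.smul_apply, Matrix.one_apply, this, hz2 i j i' j' hj]
      · have : ¬((i,j) = (i',j')) := by simp [Prod.ext_iff, hi]
        simp [Matrix.smul_apply, Matrix.one_apply, this, hz1 i j i' j' hi]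
    rw [hS] at hss
    have hl2 : lam * lam = 1 := by
      have := Matrix.ext_iff.mpr hss ((0:Fin 2),(0:Fin 2)) (0,0)
      simpa [Matrix.smul_mul, Matrix.mul_smul, smul_smul, Matrix.one_apply] using this
    rcases mul_self_eq_one_iff.mp hl2 with h1 | h1
    · left; rw [hS, h1, one_smul]
    · right; rw [hS, h1, neg_smul, one_smul]
  · rintro (rfl | rfl) <;>
      refine ⟨?_, ?_, ?_, ?_, ?_⟩ <;>
      simp [Lone_smul, Ltwo_smul, Lone_one, Ltwo_one, Lone_neg, Ltwo_neg,
        Matrix.smul_mul, Matrix.mul_smul, smul_smul, mul_comm]
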